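/- Let β : ℤ₊^d → ℝ be a recursively generated multisequence with minimal characteristic polynomials (p₁,…,p_d) (so p_l(shift_l)β = 0 and p_l is the monic annihilating polynomial of minimal degree for the l-th shift). If the moment matrix M(β) is positive semidefinite, then each p_l is squarefree, i.e. p_l has distinct roots (over ℂ). -/

import Mathlib

open MvPolynomial

/-- `q(shift_l) β = 0`. -/
def AnnihilatesShift (d : ℕ) (β : (Fin d →₀ ℕ) → ℝ) (l : Fin d) (q : Polynomial ℝ) : Prop :=
  ∀ i : Fin d →₀ ℕ,
    ∑ k ∈ Finset.range (q.natDegree + 1), q.coeff k * β (i + Finsupp.single l k) = 0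

noncomputable def Lfun (d : ℕ) (β : (Fin d →₀ ℕ) → ℝ) : MvPolynomial (Fin d) ℝ →ₗ[ℝ] ℝ :=
  Finsupp.linearCombination ℝ β ∘ₗ (AddMonoidAlgebra.coeffLinearEquiv ℝ).toLinearMap

lemma Lfun_monomial (d : ℕ) (β : (Fin d →₀ ℕ) → ℝ) (i : Fin d →₀ ℕ) (c : ℝ) :
    Lfun d β (monomial i c) = c * β i := by
  rw [← single_eq_monomial]
  show Finsupp.linearCombination ℝ β (Finsupp.single i c) = c * β i
  rw [Finsupp.linearCombination_single, smul_eq_mul]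

lemma Lfun_mul (d : ℕ) (β : (Fin d →₀ ℕ) → ℝ) (f g : MvPolynomial (Fin d) ℝ) :
    Lfun d β (f * g) = ∑ i ∈ f.support, ∑ j ∈ g.support, coeff i f * coeff j g * β (i + j) := by
  conv_lhs => rw [f.as_sum, g.as_sum, Finset.sum_mul_sum]
  rw [map_sum]
  refine Finset.sum_congr rfl fun i hi => ?_
  rw [map_sum]
  refine Finset.sum_congr rfl fun j hj => ?_
  rw [monomial_mul, Lfun_monomial]

lemma Lfun_aeval_monomial (d : ℕ) (β : (Fin d →₀ ℕ) → ℝ) (l : Fin d) (q : Polynomial ℝ)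
    (i : Fin d →₀ ℕ) :
    Lfun d β (Polynomial.aeval (X l : MvPolynomial (Fin d) ℝ) q * monomial i 1)
      = ∑ k ∈ Finset.range (q.natDegree + 1), q.coeff k * β (i + Finsupp.single l k) := by
  conv_lhs => rw [q.as_sum_range' (q.natDegree + 1) (lt_add_one _)]
  rw [map_sum, Finset.sum_mul, map_sum]
  refine Finset.sum_congr rfl fun k hk => ?_
  rw [Polynomial.aeval_monomial, X_pow_eq_monomial, algebraMap_eq, C_mul_monomial,
    monomial_mul, Lfun_monomial]
  rw [mul_one, mul_one, add_comm]

lemma Lfun_ann_mul (d : ℕ) (β : (Fin d →₀ ℕ) → ℝ) (l : Fin d) (q : Polynomial ℝ)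
    (hq : AnnihilatesShift d β l q) (f : MvPolynomial (Fin d) ℝ) :
    Lfun d β (Polynomial.aeval (X l : MvPolynomial (Fin d) ℝ) q * f) = 0 := by
  conv_lhs => rw [f.as_sum, Finset.mul_sum]
  rw [map_sum]
  refine Finset.sum_eq_zero fun i hi => ?_
  have h1 : (monomial i (coeff i f) : MvPolynomial (Fin d) ℝ)
      = coeff i f • monomial i 1 := by
    rw [smul_monomial, smul_eq_mul, mul_one]
  rw [h1, mul_smul_comm, map_smul, Lfun_aeval_monomial, hq i, smul_zero]

lemma cauchy_schwarz_zero (d : ℕ) (β : (Fin d →₀ ℕ) → ℝ)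
    (hpsd : ∀ f : MvPolynomial (Fin d) ℝ, 0 ≤ Lfun d β (f * f))
    (f g : MvPolynomial (Fin d) ℝ) (hff : Lfun d β (f * f) = 0) :
    Lfun d β (f * g) = 0 := by
  set c := Lfun d β (f * g) with hc
  set G := Lfun d β (g * g) with hG
  have key : ∀ t : ℝ, 0 ≤ G + 2 * t * c := by
    intro t
    have h := hpsd (g + t • f)
    have hexp : (g + t • f) * (g + t • f)
        = g * g + t • (f * g) + t • (f * g) + (t * t) • (f * f) := by
      have : f * g = g * f := mul_comm f g
      rw [mul_add, add_mul, add_mul, smul_mul_smul_comm, smul_mul_assoc, mul_smul_comm, this]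
      ring_nf
    rw [hexp] at h
    simp only [map_add, map_smul, hff, smul_zero, smul_eq_mul] at h
    rw [← hc, ← hG] at h
    linarith
  by_contra hc0
  have h := key (-(G + 1) / (2 * c))
  have h2 : 2 * (-(G + 1) / (2 * c)) * c = -(G + 1) := by
    field_simp
  rw [h2] at h
  linarith

/-- If `β` is recursively generated with minimal characteristic polynomials `(p₁,…,p_d)`
and the moment matrix `M(β)` is positive semidefinite, then each `p_l` has distinct
roots over `ℂ`, i.e. `p_l` is squarefree (over `ℂ`). -/
theorem minimal_char_poly_squarefree (d : ℕ) (β : (Fin d →₀ ℕ) → ℝ)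
    (p : Fin d → Polynomial ℝ)
    (hmonic : ∀ l, (p l).Monic)
    (hann : ∀ l, AnnihilatesShift d β l (p l))
    (hmin : ∀ l, ∀ q : Polynomial ℝ, q.Monic → AnnihilatesShift d β l q → p l ∣ q)
    (hpsd : ∀ f : MvPolynomial (Fin d) ℝ,
      0 ≤ ∑ i ∈ f.support, ∑ j ∈ f.support, coeff i f * coeff j f * β (i + j)) :
    ∀ l : Fin d, Squarefree ((p l).map (algebraMap ℝ ℂ)) := by
  have hpsd' : ∀ f : MvPolynomial (Fin d) ℝ, 0 ≤ Lfun d β (f * f) := by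
    intro f; rw [Lfun_mul]; exact hpsd f
  intro l
  -- first, squarefree over ℝ
  have hsf : Squarefree (p l) := by
    intro r hr
    by_contra hu
    have hP0 : p l ≠ 0 := (hmonic l).ne_zero
    have hr0 : r ≠ 0 := by rintro rfl; simp at hr; exact hP0 hr
    set r' := r * Polynomial.C r.leadingCoeff⁻¹ with hr'def
    have hmr' : r'.Monic := Polynomial.monic_mul_leadingCoeff_inv hr0
    have hlc : r.leadingCoeff ≠ 0 := Polynomial.leadingCoeff_ne_zero.mpr hr0
    have hur' : ¬ IsUnit r' := by
      intro h
      apply hu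
      have hre : r = r' * Polynomial.C r.leadingCoeff := by
        rw [hr'def, mul_assoc, ← Polynomial.C_mul, inv_mul_cancel₀ hlc, Polynomial.C_1, mul_one]
      rw [hre]
      exact h.mul (Polynomial.isUnit_C.mpr (isUnit_iff_ne_zero.mpr hlc))
    have hrr' : r' * r' ∣ p l := by
      have hcu : IsUnit (Polynomial.C r.leadingCoeff⁻¹ * Polynomial.C r.leadingCoeff⁻¹) :=
        (Polynomial.isUnit_C.mpr (IsUnit.inv (isUnit_iff_ne_zero.mpr
          (Polynomial.leadingCoeff_ne_zero.mpr hr0)))).mul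
          (Polynomial.isUnit_C.mpr (IsUnit.inv (isUnit_iff_ne_zero.mpr
          (Polynomial.leadingCoeff_ne_zero.mpr hr0))))
      have : r' * r' = (r * r) * (Polynomial.C r.leadingCoeff⁻¹ * Polynomial.C r.leadingCoeff⁻¹) := by
        rw [hr'def]; ring
      rw [this, hcu.mul_right_dvd]
      exact hr
    obtain ⟨q, hpq⟩ : r' ∣ p l := dvd_trans (dvd_mul_right r' r') hrr'
    have hmq : q.Monic := by
      have := hmonic l
      rw [hpq] at this
      exact hmr'.of_mul_monic_left this
    have hr'0 : r' ≠ 0 := hmr'.ne_zero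
    obtain ⟨t, hqt⟩ : r' ∣ q := by
      have : r' * r' ∣ r' * q := hpq ▸ hrr'
      exact (mul_dvd_mul_iff_left hr'0).mp this
    have hqq : q * q = p l * t := by rw [hpq, hqt]; ring
    -- q annihilates β
    have hqann : AnnihilatesShift d β l q := by
      intro i
      rw [← Lfun_aeval_monomial]
      set f := Polynomial.aeval (X l : MvPolynomial (Fin d) ℝ) q * monomial i 1 with hf
      have hff : Lfun d β (f * f) = 0 := by
        have hfeq : f * f = Polynomial.aeval (X l : MvPolynomial (Fin d) ℝ) (p l) *
            (Polynomial.aeval (X l : MvPolynomial (Fin d) ℝ) t * monomial (i + i) 1) := by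
          rw [hf]
          rw [show (Polynomial.aeval (X l : MvPolynomial (Fin d) ℝ) q * monomial i 1) *
              (Polynomial.aeval (X l : MvPolynomial (Fin d) ℝ) q * monomial i 1)
            = (Polynomial.aeval (X l : MvPolynomial (Fin d) ℝ) q *
               Polynomial.aeval (X l : MvPolynomial (Fin d) ℝ) q) *
              (monomial i 1 * monomial i 1) by ring]
          rw [← map_mul, hqq, map_mul, monomial_mul, one_mul]
          ring
        rw [hfeq]
        exact Lfun_ann_mul d β l (p l) (hann l) _
      have := cauchy_schwarz_zero d β hpsd' f 1 hff
      rwa [mul_one] at this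
    have hdvd : p l ∣ q := hmin l q hmq hqann
    have hq0 : q ≠ 0 := hmq.ne_zero
    have hle : (p l).natDegree ≤ q.natDegree := Polynomial.natDegree_le_of_dvd hdvd hq0
    have hdeg : (p l).natDegree = r'.natDegree + q.natDegree := by
      rw [hpq]; exact hmr'.natDegree_mul hmq
    have hr'pos : 0 < r'.natDegree := by
      rcases Nat.eq_zero_or_pos r'.natDegree with h | h
      · exact absurd (hmr'.natDegree_eq_zero.mp h ▸ isUnit_one) hur'
      · exact h
    omega
  -- transfer to ℂ
  have hsep : (p l).Separable := (PerfectField.separable_iff_squarefree).mpr hsf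
  exact (hsep.map).squarefree
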